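/- Let μ_n = (1/n)∑_{j=1}^n δ_{λ_j} be the empirical measure of any n points λ_1,…,λ_n in ℂ and μ_∞ be the uniform probability measure on the closed unit disk in ℂ. Then for every p ≥ 1, the p-Wasserstein distance satisfies W_p(μ_n, μ_∞) ≥ 1/(3√n). -/

import Mathlib

open MeasureTheory

/-- The `p`-Wasserstein distance between two measures on `ℂ`, as an extended real. -/
noncomputable def wassersteinDist (p : ℝ) (μ ν : Measure ℂ) : ENNReal :=
  ⨅ q : {q : Measure (ℂ × ℂ) // q.map Prod.fst = μ ∧ q.map Prod.snd = ν},
    (∫⁻ x, (ENNReal.ofReal (‖x.1 - x.2‖)) ^ p ∂(q : Measure (ℂ × ℂ))) ^ (1 / p)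

/-- The uniform probability measure on the closed unit disk (the circular law). -/
noncomputable def circularLaw : Measure ℂ :=
  (volume (Metric.closedBall (0 : ℂ) 1))⁻¹ • volume.restrict (Metric.closedBall (0 : ℂ) 1)

theorem stmt_5 (n : ℕ) (hn : 1 ≤ n) (l : Fin n → ℂ) (p : ℝ) (hp : 1 ≤ p) :
    wassersteinDist p ((n : ENNReal)⁻¹ • ∑ j : Fin n, Measure.dirac (l j)) circularLaw ≥
      ENNReal.ofReal (1 / (3 * Real.sqrt n)) := by
  have hn0 : (0:ℝ) < n := by exact_mod_cast hn
  have hs : (0:ℝ) < Real.sqrt n := Real.sqrt_pos.2 hn0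
  have hp0 : (0:ℝ) < p := lt_of_lt_of_le one_pos hp
  set r : ℝ := 1 / (2 * Real.sqrt n) with hrdef
  have hr0 : 0 < r := by positivity
  set A : Set ℂ := ⋃ j, Metric.closedBall (l j) r with hA
  have hAm : MeasurableSet A := MeasurableSet.iUnion fun j => measurableSet_closedBall
  have hπ0 : ((NNReal.pi : ENNReal)) ≠ 0 := by
    simp [NNReal.pi_ne_zero]
  have hπtop : ((NNReal.pi : ENNReal)) ≠ ⊤ := ENNReal.coe_ne_top
  have hvol : volume (Metric.closedBall (0:ℂ) 1) = (NNReal.pi : ENNReal) := by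
    simp [Complex.volume_closedBall]
  -- circularLaw is a probability measure
  have hν_univ : circularLaw Set.univ = 1 := by
    rw [circularLaw, Measure.smul_apply, Measure.restrict_apply MeasurableSet.univ,
      Set.univ_inter, hvol, smul_eq_mul, ENNReal.inv_mul_cancel hπ0 hπtop]
  -- each small ball has circularLaw-measure at most r^2
  have hν_ball : ∀ c : ℂ, circularLaw (Metric.closedBall c r) ≤ ENNReal.ofReal (r^2) := by
    intro c
    rw [circularLaw, Measure.smul_apply, Measure.restrict_apply measurableSet_closedBall,
      hvol, smul_eq_mul]
    calc (NNReal.pi : ENNReal)⁻¹ * volume (Metric.closedBall c r ∩ Metric.closedBall 0 1)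
        ≤ (NNReal.pi : ENNReal)⁻¹ * volume (Metric.closedBall c r) := by
          gcongr; exact Set.inter_subset_left
      _ = (NNReal.pi : ENNReal)⁻¹ * (ENNReal.ofReal r ^ 2 * NNReal.pi) := by
          rw [Complex.volume_closedBall]
      _ = ENNReal.ofReal r ^ 2 * ((NNReal.pi : ENNReal)⁻¹ * NNReal.pi) := by ring
      _ = ENNReal.ofReal (r^2) := by
          rw [ENNReal.inv_mul_cancel hπ0 hπtop, mul_one, ENNReal.ofReal_pow hr0.le]
  have hr2 : r ^ 2 = 1 / (4 * n) := by
    rw [hrdef]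
    rw [div_pow, one_pow, mul_pow, Real.sq_sqrt hn0.le]
    norm_num
  -- circularLaw A ≤ 1/4
  have hνA : circularLaw A ≤ ENNReal.ofReal (1/4) := by
    calc circularLaw A ≤ ∑ j : Fin n, circularLaw (Metric.closedBall (l j) r) :=
          measure_iUnion_fintype_le _ _
      _ ≤ ∑ _j : Fin n, ENNReal.ofReal (r^2) := Finset.sum_le_sum fun j _ => hν_ball _
      _ = (n : ENNReal) * ENNReal.ofReal (r^2) := by
          rw [Finset.sum_const, Finset.card_univ, Fintype.card_fin, nsmul_eq_mul]
      _ = ENNReal.ofReal (n * r^2) := by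
          rw [ENNReal.ofReal_mul (le_of_lt hn0), ENNReal.ofReal_natCast]
      _ = ENNReal.ofReal (1/4) := by
          congr 1
          rw [hr2]
          field_simp
  refine le_iInf fun ⟨q, hq1, hq2⟩ => ?_
  simp only
  -- the bad set
  set S : Set (ℂ × ℂ) := (Set.range l) ×ˢ Aᶜ with hS
  have hSm : MeasurableSet S := ((Set.finite_range l).measurableSet).prod hAm.compl
  -- q of the whole space is 1
  have hq_univ : q Set.univ = 1 := by
    have := congrArg (fun m : Measure ℂ => m Set.univ) hq2
    simpa [Measure.map_apply measurable_snd MeasurableSet.univ, hν_univ] using this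
  -- first marginal gives no mass outside the range of l
  have hq_fst : q (Prod.fst ⁻¹' (Set.range l)ᶜ) = 0 := by
    rw [← Measure.map_apply measurable_fst (Set.finite_range l).measurableSet.compl, hq1]
    simp only [Measure.smul_apply, Measure.coe_finset_sum, Finset.sum_apply, smul_eq_mul]
    have : ∀ j : Fin n, Measure.dirac (l j) ((Set.range l)ᶜ) = 0 := by
      intro j
      rw [Measure.dirac_apply' _ (Set.finite_range l).measurableSet.compl]
      simp [Set.indicator_apply]
    simp [this]
  have hq_snd : q (Prod.snd ⁻¹' A) ≤ ENNReal.ofReal (1/4) := by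
    rw [← Measure.map_apply measurable_snd hAm, hq2]; exact hνA
  -- q S ≥ 3/4
  have hqSc : q Sᶜ ≤ ENNReal.ofReal (1/4) := by
    have hsub : Sᶜ ⊆ (Prod.fst ⁻¹' (Set.range l)ᶜ) ∪ (Prod.snd ⁻¹' A) := by
      intro x hx
      rw [hS] at hx
      simp only [Set.mem_compl_iff, Set.mem_prod, not_and_or, not_not] at hx
      rcases hx with h | h
      · exact Or.inl h
      · exact Or.inr h
    calc q Sᶜ ≤ q (Prod.fst ⁻¹' (Set.range l)ᶜ) + q (Prod.snd ⁻¹' A) :=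
          le_trans (measure_mono hsub) (measure_union_le _ _)
      _ ≤ 0 + ENNReal.ofReal (1/4) := add_le_add hq_fst.le hq_snd
      _ = ENNReal.ofReal (1/4) := by rw [zero_add]
  have hqS : ENNReal.ofReal (3/4) ≤ q S := by
    have h1 : (1 : ENNReal) ≤ q S + ENNReal.ofReal (1/4) := by
      calc (1 : ENNReal) = q Set.univ := hq_univ.symm
        _ ≤ q (S ∪ Sᶜ) := by rw [Set.union_compl_self]
        _ ≤ q S + q Sᶜ := measure_union_le _ _
        _ ≤ q S + ENNReal.ofReal (1/4) := by gcongr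
    have h2 : ENNReal.ofReal (3/4) + ENNReal.ofReal (1/4) ≤ q S + ENNReal.ofReal (1/4) := by
      have he : ENNReal.ofReal (3/4) + ENNReal.ofReal (1/4) = 1 := by
        rw [← ENNReal.ofReal_add (by norm_num) (by norm_num)]
        norm_num
      rw [he]
      exact h1
    exact (ENNReal.add_le_add_iff_right ENNReal.ofReal_ne_top).mp h2
  -- pointwise lower bound on the cost on S
  have hpoint : ∀ x ∈ S, (ENNReal.ofReal r) ^ p ≤
      (ENNReal.ofReal (‖x.1 - x.2‖)) ^ p := by
    rintro ⟨a, b⟩ ⟨⟨j, hj⟩, hb⟩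
    have hb' : b ∉ Metric.closedBall (l j) r := fun h => hb (Set.mem_iUnion.2 ⟨j, h⟩)
    have hdist : r < ‖a - b‖ := by
      rw [Metric.mem_closedBall, not_le] at hb'
      calc r < dist b (l j) := hb'
        _ = ‖a - b‖ := by
          rw [dist_comm, hj, Complex.dist_eq]
    exact ENNReal.rpow_le_rpow (ENNReal.ofReal_le_ofReal hdist.le) hp0.le
  -- lower bound on the transport cost integral
  have hint : (ENNReal.ofReal r) ^ p * q S ≤
      ∫⁻ x, (ENNReal.ofReal (‖x.1 - x.2‖)) ^ p ∂q := by
    calc (ENNReal.ofReal r) ^ p * q S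
        = ∫⁻ x in S, (ENNReal.ofReal r) ^ p ∂q := by rw [setLIntegral_const]
      _ = ∫⁻ x, S.indicator (fun _ => (ENNReal.ofReal r) ^ p) x ∂q := by
          rw [lintegral_indicator hSm]
      _ ≤ ∫⁻ x, (ENNReal.ofReal (‖x.1 - x.2‖)) ^ p ∂q := by
          refine lintegral_mono fun x => ?_
          by_cases hx : x ∈ S
          · simpa [Set.indicator_of_mem hx] using hpoint x hx
          · simp [Set.indicator_of_notMem hx]
  -- put everything together
  calc ENNReal.ofReal (1 / (3 * Real.sqrt n))
      ≤ ENNReal.ofReal (r * (3/4)) := by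
        apply ENNReal.ofReal_le_ofReal
        rw [hrdef, div_mul_eq_mul_div, one_mul, div_le_div_iff₀ (by positivity) (by positivity)]
        nlinarith
    _ = ENNReal.ofReal r * ENNReal.ofReal (3/4) := ENNReal.ofReal_mul hr0.le
    _ ≤ ENNReal.ofReal r * (ENNReal.ofReal (3/4)) ^ (1/p) := by
        gcongr
        calc ENNReal.ofReal (3/4) = ENNReal.ofReal (3/4) ^ (1:ℝ) := (ENNReal.rpow_one _).symm
          _ ≤ ENNReal.ofReal (3/4) ^ (1/p) :=
              ENNReal.rpow_le_rpow_of_exponent_ge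
                (ENNReal.ofReal_le_one.mpr (by norm_num))
                (by rw [div_le_one hp0]; exact hp)
    _ ≤ ENNReal.ofReal r * (q S) ^ (1/p) := by
        exact mul_le_mul_right (ENNReal.rpow_le_rpow hqS (by positivity)) _
    _ = ((ENNReal.ofReal r) ^ p * q S) ^ (1/p) := by
        rw [ENNReal.mul_rpow_of_nonneg _ _ (by positivity), ← ENNReal.rpow_mul,
          mul_one_div_cancel hp0.ne', ENNReal.rpow_one]
    _ ≤ (∫⁻ x, (ENNReal.ofReal (‖x.1 - x.2‖)) ^ p ∂q) ^ (1/p) :=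
        ENNReal.rpow_le_rpow hint (by positivity)
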